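/- Consider the best-response opinion dynamics on a finite simple connected graph G with edge set E, in which all stubborn agents are partially stubborn (no fully stubborn agents; K_i < ∞ for all i) and at least one K_j > 0. Let λ_A be the largest eigenvalue of A. Then λ_A ≥ 2|E| / (2|E| + Σ_{j : K_j > 0} K_j); equivalently, the convergence time T = 1/(1 − λ_A) satisfies T ≥ 1 + 2|E| / Σ_{j : K_j > 0} K_j. -/

import Mathlib

open Matrix Finset Pointwise

/-- With only partially stubborn agents (all `K_i` finite, at least one
positive), the largest eigenvalue `λ_A` of the best-response matrix `A` satisfies
`λ_A ≥ 2|E| / (2|E| + ∑_{j : K_j > 0} K_j)`. -/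
theorem stmt13 {n : ℕ} (G : SimpleGraph (Fin n)) [DecidableRel G.Adj]
    (hconn : G.Connected)
    (K : Fin n → ℝ) (hK : ∀ i, 0 ≤ K i) (hstub : ∃ j, 0 < K j)
    (A : Matrix (Fin n) (Fin n) ℝ)
    (hA : ∀ i j, A i j = if G.Adj i j then 1 / ((G.degree i : ℝ) + K i) else 0)
    (lamA : ℝ) (hmem : lamA ∈ spectrum ℝ A) (hub : ∀ μ ∈ spectrum ℝ A, |μ| ≤ lamA) :
    2 * (G.edgeFinset.card : ℝ) /
        (2 * (G.edgeFinset.card : ℝ) + ∑ j ∈ Finset.univ.filter (fun j => 0 < K j), K j)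
      ≤ lamA := by
  classical
  -- weights
  set w : Fin n → ℝ := fun i => (G.degree i : ℝ) + K i with hwdef
  have hw : ∀ i, 0 < w i := by
    intro i
    rcases (hK i).lt_or_eq with h | h
    · have : (0:ℝ) ≤ (G.degree i : ℝ) := by positivity
      simp only [hwdef]; linarith
    · obtain ⟨j, hj⟩ := hstub
      have hij : i ≠ j := by rintro rfl; exact absurd hj (by rw [← h]; simp)
      obtain ⟨p⟩ := hconn.preconnected i j
      have hdeg : 0 < G.degree i := by
        rw [SimpleGraph.degree_pos_iff_exists_adj]
        cases p with
        | nil => exact absurd rfl hij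
        | cons hadj _ => exact ⟨_, hadj⟩
      have : (0:ℝ) < (G.degree i : ℝ) := by exact_mod_cast hdeg
      simp only [hwdef]; linarith
  set s : Fin n → ℝ := fun i => Real.sqrt (w i) with hsdef
  have hs : ∀ i, 0 < s i := fun i => Real.sqrt_pos.mpr (hw i)
  have hs2 : ∀ i, s i * s i = w i := fun i => Real.mul_self_sqrt (hw i).le
  set D : Matrix (Fin n) (Fin n) ℝ := diagonal s with hDdef
  set Dinv : Matrix (Fin n) (Fin n) ℝ := diagonal (fun i => (s i)⁻¹) with hDinvdef
  -- the symmetrized matrix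
  set S : Matrix (Fin n) (Fin n) ℝ := D * A * Dinv with hSdef
  have hSentry : ∀ i j, S i j = (if G.Adj i j then 1 else 0) / (s i * s j) := by
    intro i j
    have h1 : S i j = s i * A i j * (s j)⁻¹ := by
      simp [hSdef, hDdef, hDinvdef, Matrix.mul_apply, Matrix.diagonal,
        Finset.sum_ite_eq, Finset.sum_ite_eq']
    rw [h1, hA]
    by_cases h : G.Adj i j
    · simp only [h, if_true]
      have hwi : (G.degree i : ℝ) + K i = s i * s i := (hs2 i).symm
      rw [hwi]
      have hsi := (hs i).ne'
      have hsj := (hs j).ne'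
      field_simp
    · simp [h]
  have hSsymm : S.IsHermitian := by
    ext i j
    simp only [Matrix.conjTranspose_apply, star_trivial]
    rw [hSentry i j, hSentry j i]
    by_cases h : G.Adj i j
    · simp [h, h.symm, mul_comm (s j) (s i)]
    · have h' : ¬ G.Adj j i := fun h'' => h h''.symm
      simp [h, h']
  -- D and Dinv are units
  have hDD : D * Dinv = 1 := by
    rw [hDdef, hDinvdef, Matrix.diagonal_mul_diagonal]
    have : (fun i => s i * (s i)⁻¹) = fun _ : Fin n => (1:ℝ) :=
      funext fun i => mul_inv_cancel₀ (hs i).ne'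
    rw [this, Matrix.diagonal_one]
  have hDD' : Dinv * D = 1 := by
    rw [hDinvdef, hDdef, Matrix.diagonal_mul_diagonal]
    have : (fun i => (s i)⁻¹ * s i) = fun _ : Fin n => (1:ℝ) :=
      funext fun i => inv_mul_cancel₀ (hs i).ne'
    rw [this, Matrix.diagonal_one]
  have hUD : IsUnit D := ⟨⟨D, Dinv, hDD, hDD'⟩, rfl⟩
  have hUDinv : IsUnit Dinv := ⟨⟨Dinv, D, hDD', hDD⟩, rfl⟩
  have cancel : ∀ M : Matrix (Fin n) (Fin n) ℝ, Dinv * (D * M * Dinv) * D = M := by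
    intro M
    calc Dinv * (D * M * Dinv) * D = (Dinv * D) * M * (Dinv * D) := by
          simp only [Matrix.mul_assoc]
      _ = M := by rw [hDD', Matrix.one_mul, Matrix.mul_one]
  -- spectrum of S equals spectrum of A
  have hspec : spectrum ℝ S = spectrum ℝ A := by
    ext μ
    rw [spectrum.mem_iff, spectrum.mem_iff]
    have key : algebraMap ℝ (Matrix (Fin n) (Fin n) ℝ) μ - S =
        D * (algebraMap ℝ (Matrix (Fin n) (Fin n) ℝ) μ - A) * Dinv := by
      rw [Matrix.mul_sub, Matrix.sub_mul, hSdef]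
      congr 1
      rw [Algebra.algebraMap_eq_smul_one, Matrix.mul_smul, Matrix.mul_one,
        Matrix.smul_mul, hDD]
    rw [key]
    set M := algebraMap ℝ (Matrix (Fin n) (Fin n) ℝ) μ - A with hM
    constructor
    · intro h1 h2
      exact h1 ((hUD.mul h2).mul hUDinv)
    · intro h1 h2
      apply h1
      have h3 := (hUDinv.mul h2).mul hUD
      rwa [cancel M] at h3
  -- the shifted matrix is PSD
  set T : Matrix (Fin n) (Fin n) ℝ := lamA • (1 : Matrix (Fin n) (Fin n) ℝ) - S with hTdef
  have hTherm : T.IsHermitian := by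
    rw [Matrix.IsHermitian, hTdef, Matrix.conjTranspose_sub, Matrix.conjTranspose_smul,
      Matrix.conjTranspose_one, hSsymm, star_trivial]
  have hTpsd : T.PosSemidef := by
    refine hTherm.posSemidef_iff_eigenvalues_nonneg.mpr fun k => ?_
    show (0:ℝ) ≤ hTherm.eigenvalues k
    have hk := hTherm.eigenvalues_mem_spectrum_real k
    have hTalg : T = algebraMap ℝ (Matrix (Fin n) (Fin n) ℝ) lamA - S := by
      rw [hTdef, Algebra.algebraMap_eq_smul_one]
    have hspecT : spectrum ℝ T = ({lamA} : Set ℝ) - spectrum ℝ A := by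
      rw [hTalg, ← spectrum.singleton_sub_eq, hspec]
    rw [hspecT] at hk
    obtain ⟨a, ha, b, hb, hab⟩ := hk
    rw [Set.mem_singleton_iff] at ha
    have hble : b ≤ lamA := le_trans (le_abs_self b) (hub b hb)
    have : a - b = hTherm.eigenvalues k := hab
    linarith
  -- evaluate the quadratic form at s
  have hq := hTpsd.dotProduct_mulVec_nonneg s
  have hstar : star s = s := by
    funext i; simp
  rw [hstar] at hq
  have hTs : T *ᵥ s = lamA • s - S *ᵥ s := by
    rw [hTdef, Matrix.sub_mulVec, Matrix.smul_mulVec, Matrix.one_mulVec]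
  rw [hTs] at hq
  have hdot1 : s ⬝ᵥ s = ∑ i, w i := by
    simp only [dotProduct]
    exact Finset.sum_congr rfl fun i _ => hs2 i
  have hdot2 : s ⬝ᵥ (S *ᵥ s) = ∑ i, (G.degree i : ℝ) := by
    simp only [dotProduct, Matrix.mulVec, dotProduct]
    have : ∀ i, s i * (∑ j, S i j * s j) = (G.degree i : ℝ) := by
      intro i
      rw [Finset.mul_sum]
      have hterm : ∀ j, s i * (S i j * s j) = (if G.Adj i j then (1:ℝ) else 0) := by
        intro j
        rw [hSentry i j]
        have hsi := (hs i).ne'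
        have hsj := (hs j).ne'
        field_simp
      rw [Finset.sum_congr rfl fun j _ => hterm j, Finset.sum_boole]
      simp [← SimpleGraph.neighborFinset_eq_filter,
        SimpleGraph.card_neighborFinset_eq_degree]
    exact Finset.sum_congr rfl fun i _ => this i
  have hdeg2E : ∑ i, (G.degree i : ℝ) = 2 * (G.edgeFinset.card : ℝ) := by
    have := G.sum_degrees_eq_twice_card_edges
    exact_mod_cast congrArg (Nat.cast : ℕ → ℝ) this
  have hsumw : ∑ i, w i = 2 * (G.edgeFinset.card : ℝ) + ∑ j, K j := by
    rw [hwdef]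
    rw [Finset.sum_add_distrib, hdeg2E]
  have hKfilter : ∑ j ∈ Finset.univ.filter (fun j => 0 < K j), K j = ∑ j, K j := by
    apply Finset.sum_filter_of_ne
    intro x _ hx
    exact lt_of_le_of_ne (hK x) (Ne.symm hx)
  -- put it together
  have hquad : s ⬝ᵥ (lamA • s - S *ᵥ s) =
      lamA * (∑ i, w i) - 2 * (G.edgeFinset.card : ℝ) := by
    rw [dotProduct_sub, dotProduct_smul, smul_eq_mul, hdot1, hdot2, hdeg2E]
  rw [hquad] at hq
  have hmain : 2 * (G.edgeFinset.card : ℝ) ≤ lamA * (∑ i, w i) := by linarith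
  rw [hsumw, ← hKfilter] at hmain
  have hKpos : 0 < ∑ j ∈ Finset.univ.filter (fun j => 0 < K j), K j := by
    obtain ⟨j, hj⟩ := hstub
    apply Finset.sum_pos'
    · intro i hi; exact (Finset.mem_filter.mp hi).2.le
    · exact ⟨j, Finset.mem_filter.mpr ⟨Finset.mem_univ j, hj⟩, hj⟩
  have hEnn : (0:ℝ) ≤ 2 * (G.edgeFinset.card : ℝ) := by positivity
  have hden : 0 < 2 * (G.edgeFinset.card : ℝ) +
      ∑ j ∈ Finset.univ.filter (fun j => 0 < K j), K j := by linarith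
  rw [div_le_iff₀ hden]
  linarith [hmain]
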